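/- The cubic element v ∈ ∧³p defined by B([x,x'],x'') = −2 B_{C(p)}(v, x∧x'∧x'') for all x,x',x'' ∈ p commutes (in the Clifford algebra) with ν_*(x) for every x ∈ h_r; hence each h_r-weight space of L = C(p)u is stable under left Clifford multiplication by v. -/

import Mathlib

/-- A Lie algebra is reductive if its radical coincides with its center. -/
def LieAlgebra.IsReductive' (R L : Type*) [CommRing R] [LieRing L] [LieAlgebra R L] : Prop :=
  LieAlgebra.radical R L = LieAlgebra.center R L

noncomputable instance : Invertible (2 : ℂ) := invertibleOfNonzero two_ne_zero

set_option linter.unusedSectionVars false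

section AuxSpin

open CliffordAlgebra Submodule

variable {V : Type*} [AddCommGroup V] [Module ℂ V]

local notation "E" => ExteriorAlgebra.ι ℂ

/-- The bilinear form used by `(equivExterior Q).symm` as a `changeForm`. -/
noncomputable def betaQ (Q : QuadraticForm ℂ V) : LinearMap.BilinForm ℂ V :=
  -QuadraticMap.associated (R := ℂ) (-Q)

lemma symm_triple (Q : QuadraticForm ℂ V) (a b c : V) :
    (equivExterior Q).symm (E a * E b * E c) =
    ι Q a * ι Q b * ι Q c - betaQ Q b c • ι Q a + betaQ Q a c • ι Q b - betaQ Q a b • ι Q c := by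
  have h1 : (equivExterior Q).symm (E a * E b * E c)
      = changeForm (changeForm.neg_proof (changeForm.associated_neg_proof (Q := Q)))
        (E a * (E b * E c)) := by
    rw [mul_assoc]; rfl
  rw [h1, changeForm_ι_mul, changeForm_ι_mul_ι]
  simp only [betaQ]
  simp only [map_sub, contractLeft_ι_mul, contractLeft_ι, contractLeft_algebraMap,
    mul_sub, sub_zero]
  rw [show (ι Q) a * (algebraMap ℂ (CliffordAlgebra Q))
        (((-QuadraticMap.associated (-Q) : LinearMap.BilinForm ℂ V) b) c)
        = (-QuadraticMap.associated (-Q) : LinearMap.BilinForm ℂ V) b c • ι Q a from by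
        rw [← Algebra.commutes, ← Algebra.smul_def],
      show (ι Q) b * (algebraMap ℂ (CliffordAlgebra Q))
        (((-QuadraticMap.associated (-Q) : LinearMap.BilinForm ℂ V) a) c)
        = (-QuadraticMap.associated (-Q) : LinearMap.BilinForm ℂ V) a c • ι Q b from by
        rw [← Algebra.commutes, ← Algebra.smul_def],
      mul_assoc]
  abel

lemma D_symm_triple (Q : QuadraticForm ℂ V) (ν₀ : CliffordAlgebra Q) (f : V →ₗ[ℂ] V)
    (hf : ∀ y : V, ν₀ * ι Q y - ι Q y * ν₀ = ι Q (f y))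
    (hskew : ∀ y z : V, betaQ Q (f y) z = - betaQ Q y (f z))
    (a b c : V) :
    ν₀ * (equivExterior Q).symm (E a * E b * E c) - (equivExterior Q).symm (E a * E b * E c) * ν₀
      = (equivExterior Q).symm (E (f a) * E b * E c + E a * E (f b) * E c + E a * E b * E (f c)) := by
  have e : ∀ y : V, ν₀ * ι Q y = ι Q (f y) + ι Q y * ν₀ := fun y => sub_eq_iff_eq_add.mp (hf y)
  have key : ∀ y z w : V, ν₀ * (ι Q y * ι Q z * ι Q w) =
      ι Q (f y) * ι Q z * ι Q w + ι Q y * ι Q (f z) * ι Q w + ι Q y * ι Q z * ι Q (f w)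
        + (ι Q y * ι Q z * ι Q w) * ν₀ := by
    intro y z w
    calc ν₀ * (ι Q y * ι Q z * ι Q w) = (ν₀ * ι Q y) * ι Q z * ι Q w := by noncomm_ring
    _ = (ι Q (f y) + ι Q y * ν₀) * ι Q z * ι Q w := by rw [e]
    _ = ι Q (f y) * ι Q z * ι Q w + ι Q y * ((ν₀ * ι Q z) * ι Q w) := by noncomm_ring
    _ = ι Q (f y) * ι Q z * ι Q w + ι Q y * (((ι Q (f z) + ι Q z * ν₀)) * ι Q w) := by rw [e]
    _ = ι Q (f y) * ι Q z * ι Q w + ι Q y * ι Q (f z) * ι Q w + (ι Q y * ι Q z) * (ν₀ * ι Q w) := by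
        noncomm_ring
    _ = ι Q (f y) * ι Q z * ι Q w + ι Q y * ι Q (f z) * ι Q w
          + (ι Q y * ι Q z) * ((ι Q (f w) + ι Q w * ν₀)) := by rw [e]
    _ = _ := by noncomm_ring
  rw [map_add, map_add, symm_triple, symm_triple, symm_triple, symm_triple]
  simp only [mul_sub, sub_mul, mul_add, add_mul, mul_smul_comm, smul_mul_assoc, map_smul]
  simp only [key, e]
  simp only [hskew]
  module

variable [FiniteDimensional ℂ V]

private lemma E_swap (y z : V) : E y * E z = -(E z * E y) :=
  eq_neg_of_add_eq_zero_left (ExteriorAlgebra.ι_add_mul_swap y z)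

private lemma s12 (u v w : V) : E u * E v * E w = -(E v * E u * E w) := by
  rw [E_swap u v, neg_mul]

private lemma s23 (u v w : V) : E u * E v * E w = -(E u * E w * E v) := by
  rw [mul_assoc, E_swap v w, mul_neg, mul_assoc]

private lemma z12 (u w : V) : E u * E u * E w = 0 := by
  rw [ExteriorAlgebra.ι_sq_zero, zero_mul]

private lemma z23 (u w : V) : E u * E w * E w = 0 := by
  rw [mul_assoc, ExteriorAlgebra.ι_sq_zero, mul_zero]

private lemma z13 (u w : V) : E u * E w * E u = 0 := by
  rw [s23, z12, neg_zero]

lemma pairing_zero (Bv : LinearMap.BilinForm ℂ V) (hBv : Bv.Nondegenerate) (hsy : Bv.IsSymm)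
    (Bc : LinearMap.BilinForm ℂ (ExteriorAlgebra ℂ V))
    (hBc : ∀ a b c a' b' c' : V, Bc (E a * E b * E c) (E a' * E b' * E c') =
      Matrix.det !![Bv a a', Bv a b', Bv a c'; Bv b a', Bv b b', Bv b c';
                    Bv c a', Bv c b', Bv c c'])
    (w : ExteriorAlgebra ℂ V)
    (hw : w ∈ Submodule.span ℂ {z | ∃ a b c : V, z = E a * E b * E c})
    (hperp : ∀ a b c : V, Bc w (E a * E b * E c) = 0) : w = 0 := by
  classical
  set n := Module.finrank ℂ V with hn
  set b : Module.Basis (Fin n) ℂ V := Module.finBasis ℂ V with hb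
  set d : Module.Basis (Fin n) ℂ V := Bv.dualBasis hBv b with hd
  set P : (Fin 3 → Fin n) → Prop := fun σ => σ 0 < σ 1 ∧ σ 1 < σ 2 with hP
  set m : (Fin 3 → Fin n) → ExteriorAlgebra ℂ V :=
    fun σ => E (b (σ 0)) * E (b (σ 1)) * E (b (σ 2)) with hm
  set mP : {σ : Fin 3 → Fin n // P σ} → ExteriorAlgebra ℂ V := fun σ => m σ.1 with hmP
  have sorted_mem : ∀ i j k : Fin n, i < j → j < k →
      E (b i) * E (b j) * E (b k) ∈ span ℂ (Set.range mP) := by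
    intro i j k h1 h2
    refine subset_span ⟨⟨![i,j,k], ?_, ?_⟩, rfl⟩ <;> simpa using ‹_›
  have triple_mem : ∀ i j k : Fin n,
      E (b i) * E (b j) * E (b k) ∈ span ℂ (Set.range mP) := by
    intro i j k
    rcases lt_trichotomy i j with hij | rfl | hij
    · rcases lt_trichotomy j k with hjk | rfl | hjk
      · exact sorted_mem _ _ _ hij hjk
      · rw [z23]; exact zero_mem _
      · rcases lt_trichotomy i k with hik | rfl | hik
        · rw [s23]; exact neg_mem (sorted_mem _ _ _ hik hjk)
        · rw [z13]; exact zero_mem _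
        · rw [s23, s12]; exact neg_mem (neg_mem (sorted_mem _ _ _ hik hij))
    · rw [z12]; exact zero_mem _
    · rcases lt_trichotomy j k with hjk | rfl | hjk
      · rcases lt_trichotomy i k with hik | rfl | hik
        · rw [s12]; exact neg_mem (sorted_mem _ _ _ hij hik)
        · rw [z13]; exact zero_mem _
        · rw [s12, s23]; exact neg_mem (neg_mem (sorted_mem _ _ _ hjk hik))
      · rw [z23]; exact zero_mem _
      · rw [s12, s23, s12]
        exact neg_mem (neg_mem (neg_mem (sorted_mem _ _ _ hjk hij)))
  have gen_mem : ∀ a c e : V, E a * E c * E e ∈ span ℂ (Set.range mP) := by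
    intro a c e
    have hone : ∀ a : V, E a ∈ span ℂ (Set.range fun i => E (b i)) := by
      intro a
      have hEa : E a = ∑ i, b.repr a i • E (b i) := by
        simp_rw [← map_smul, ← map_sum, b.sum_repr]
      rw [hEa]
      exact sum_mem fun i _ => smul_mem _ _ (subset_span ⟨i, rfl⟩)
    have hmm := Submodule.mul_mem_mul (Submodule.mul_mem_mul (hone a) (hone c)) (hone e)
    rw [Submodule.span_mul_span, Submodule.span_mul_span] at hmm
    refine span_le.mpr ?_ hmm
    rintro _ ⟨_, ⟨_, ⟨i, rfl⟩, _, ⟨j, rfl⟩, rfl⟩, _, ⟨k, rfl⟩, rfl⟩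
    exact triple_mem i j k
  have hw' : w ∈ span ℂ (Set.range mP) := by
    refine span_le.mpr ?_ hw
    rintro _ ⟨a, c, e, rfl⟩
    exact gen_mem a c e
  have hdual : ∀ i j : Fin n, Bv (b i) (d j) = if i = j then 1 else 0 := fun i j =>
    Bv.apply_dualBasis_right hBv hsy b i j
  have notmem : ∀ σ τ : Fin 3 → Fin n, P σ → P τ → σ ≠ τ → ∃ r, ∀ c, σ r ≠ τ c := by
    intro σ τ hσ hτ hne
    by_contra hcon
    push_neg at hcon
    obtain ⟨c0, h0⟩ := hcon 0
    obtain ⟨c1, h1⟩ := hcon 1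
    obtain ⟨c2, h2⟩ := hcon 2
    have f3 : ∀ c : Fin 3, c = 0 ∨ c = 1 ∨ c = 2 := by decide
    apply hne
    have h0' := congrArg Fin.val h0
    have h1' := congrArg Fin.val h1
    have h2' := congrArg Fin.val h2
    have hσ1 : (σ 0).val < (σ 1).val := hσ.1
    have hσ2 : (σ 1).val < (σ 2).val := hσ.2
    have hτ1 : (τ 0).val < (τ 1).val := hτ.1
    have hτ2 : (τ 1).val < (τ 2).val := hτ.2
    funext r
    rcases f3 r with rfl | rfl | rfl <;>
      (apply Fin.ext;
       rcases f3 c0 with rfl | rfl | rfl <;> rcases f3 c1 with rfl | rfl | rfl <;>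
         rcases f3 c2 with rfl | rfl | rfl <;> omega)
  have hdiag : ∀ σ τ : Fin 3 → Fin n, P σ → P τ →
      Bc (m σ) (E (d (τ 0)) * E (d (τ 1)) * E (d (τ 2))) = if σ = τ then 1 else 0 := by
    intro σ τ hσ hτ
    rw [hm]
    simp only []
    rw [hBc]
    by_cases hστ : σ = τ
    · subst hστ
      have e01 : σ 0 ≠ σ 1 := ne_of_lt hσ.1
      have e12 : σ 1 ≠ σ 2 := ne_of_lt hσ.2
      have e02 : σ 0 ≠ σ 2 := ne_of_lt (lt_trans hσ.1 hσ.2)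
      rw [if_pos rfl]
      simp [Matrix.det_fin_three, hdual, e01, e12, e02, e01.symm, e12.symm, e02.symm]
    · obtain ⟨r, hr⟩ := notmem σ τ hσ hτ hστ
      rw [if_neg hστ]
      have f3 : ∀ c : Fin 3, c = 0 ∨ c = 1 ∨ c = 2 := by decide
      rcases f3 r with rfl | rfl | rfl <;>
        simp [Matrix.det_fin_three, hdual, hr 0, hr 1, hr 2]
  obtain ⟨cf, hcf⟩ := (mem_span_range_iff_exists_fun ℂ).1 hw'
  have hc0 : ∀ τ : {σ : Fin 3 → Fin n // P σ}, cf τ = 0 := by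
    intro τ
    have h0 := hperp (d (τ.1 0)) (d (τ.1 1)) (d (τ.1 2))
    rw [← hcf] at h0
    rw [map_sum, LinearMap.sum_apply] at h0
    have heach : ∀ σ : {σ : Fin 3 → Fin n // P σ},
        Bc (cf σ • mP σ) (E (d (τ.1 0)) * E (d (τ.1 1)) * E (d (τ.1 2)))
          = if σ = τ then cf σ else 0 := by
      intro σ
      rw [map_smul, LinearMap.smul_apply, hdiag σ.1 τ.1 σ.2 τ.2]
      by_cases h : σ = τ
      · rw [if_pos (by rw [h]), if_pos h, smul_eq_mul, mul_one]
      · rw [if_neg (fun hc => h (Subtype.ext hc)), if_neg h, smul_eq_mul, mul_zero]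
    rw [Finset.sum_congr rfl (fun σ _ => heach σ), Finset.sum_ite_eq' Finset.univ τ] at h0
    simpa using h0
  rw [← hcf]
  exact Finset.sum_eq_zero fun σ _ => by rw [hc0 σ, zero_smul]

end AuxSpin

open CliffordAlgebra

set_option maxHeartbeats 2000000 in
/-- The cubic element `v ∈ ∧³p` defined by
`B([x,x'],x'') = -2 B_{C(p)}(v, x∧x'∧x'')` commutes in the Clifford algebra with
`ν_*(x)` for every `x ∈ h_r`; hence every `h_r`-weight space of `L = C(p)u` is
stable under left Clifford multiplication by `v`. -/
theorem stmt17 (g : Type*) [LieRing g] [LieAlgebra ℂ g] [Module.Finite ℂ g]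
    [LieAlgebra.IsSemisimple ℂ g]
    (B : LinearMap.BilinForm ℂ g) (hBsymm : B.IsSymm)
    (hBinv : ∀ x y z : g, B ⁅x, y⁆ z = B x ⁅y, z⁆)
    (hBnd : B.Nondegenerate)
    (r : LieSubalgebra ℂ g) (hred : LieAlgebra.IsReductive' ℂ r)
    (hBr : (B.restrict r.toSubmodule).Nondegenerate)
    (p : Submodule ℂ g) (hp : p = B.orthogonal r.toSubmodule)
    (hbr : ∀ (x : r) (y : p), ⁅(x : g), (y : g)⁆ ∈ p)
    (Q : QuadraticForm ℂ p) (hQ : Q = (B.restrict p).toQuadraticMap)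
    (hr : LieSubalgebra ℂ g) (hrr : hr ≤ r)
    -- the extension `B_{C(p)}` of `B_p` to the exterior algebra, given on
    -- decomposable degree-3 elements by the Gram determinant:
    (Bc : LinearMap.BilinForm ℂ (ExteriorAlgebra ℂ p))
    (hBc : ∀ a b c a' b' c' : p,
      Bc (ExteriorAlgebra.ι ℂ a * ExteriorAlgebra.ι ℂ b * ExteriorAlgebra.ι ℂ c)
         (ExteriorAlgebra.ι ℂ a' * ExteriorAlgebra.ι ℂ b' * ExteriorAlgebra.ι ℂ c') =
      Matrix.det !![B (a : g) (a' : g), B (a : g) (b' : g), B (a : g) (c' : g);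
                    B (b : g) (a' : g), B (b : g) (b' : g), B (b : g) (c' : g);
                    B (c : g) (a' : g), B (c : g) (b' : g), B (c : g) (c' : g)])
    -- the cubic element `v ∈ ∧³p`:
    (ve : ExteriorAlgebra ℂ p)
    (hv3 : ve ∈ (LinearMap.range (ExteriorAlgebra.ι ℂ : p →ₗ[ℂ] ExteriorAlgebra ℂ p)) ^ 3)
    (hvdef : ∀ x x' x'' : p,
      B ⁅(x : g), (x' : g)⁆ (x'' : g) = -2 * Bc ve
        (ExteriorAlgebra.ι ℂ x * ExteriorAlgebra.ι ℂ x' * ExteriorAlgebra.ι ℂ x''))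
    (v : CliffordAlgebra Q) (hv : v = (equivExterior Q).symm ve)
    -- the spin homomorphism `ν_*`:
    (ν : r →ₗ[ℂ] CliffordAlgebra Q)
    (hνdef : ∀ (x : r) (y : p), ι Q ⟨⁅(x : g), (y : g)⁆, hbr x y⟩ = ⁅ν x, ι Q y⁆)
    -- `u` and the left ideal `L = C(p)·u`:
    (u : CliffordAlgebra Q) :
    (∀ x : r, (x : g) ∈ hr → v * ν x = ν x * v) ∧
    ∀ (β : Module.Dual ℂ g) (s : CliffordAlgebra Q),
      s ∈ LinearMap.range (LinearMap.mulRight ℂ u) →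
      (∀ x : r, (x : g) ∈ hr → ν x * s = β x • s) →
      v * s ∈ LinearMap.range (LinearMap.mulRight ℂ u) ∧
        ∀ x : r, (x : g) ∈ hr → ν x * (v * s) = β x • (v * s) := by
  classical
  have hsymm : ∀ a b : g, B a b = B b a := fun a b => by simpa using hBsymm.eq a b
  have hskewg : ∀ w y z : g, B ⁅w, y⁆ z = - B y ⁅w, z⁆ := by
    intro w y z
    have h2 := hBinv y w z
    have h4 : ⁅w, y⁆ + ⁅y, w⁆ = (0 : g) := by rw [← lie_skew]; exact neg_add_cancel _
    have h5 : B (⁅w, y⁆ + ⁅y, w⁆) z = 0 := by rw [h4]; simp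
    have h6 : B ⁅w, y⁆ z + B ⁅y, w⁆ z = 0 := by simpa [map_add] using h5
    linear_combination h6 - h2
  have hinv : ∀ w a b c : g, B ⁅⁅w,a⁆,b⁆ c + B ⁅a,⁅w,b⁆⁆ c + B ⁅a,b⁆ ⁅w,c⁆ = 0 := by
    intro w a b c
    have h1 : ⁅w, ⁅a, b⁆⁆ = ⁅⁅w, a⁆, b⁆ + ⁅a, ⁅w, b⁆⁆ := leibniz_lie w a b
    have h2 : B ⁅w, ⁅a,b⁆⁆ c = - B ⁅a,b⁆ ⁅w,c⁆ := hskewg w ⁅a,b⁆ c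
    have h4 : B ⁅⁅w,a⁆,b⁆ c + B ⁅a,⁅w,b⁆⁆ c = B ⁅w,⁅a,b⁆⁆ c := by rw [h1]; simp
    rw [h4, h2]
    exact neg_add_cancel _
  -- symmetry and nondegeneracy of the restriction of B to p
  have hrestrict : ∀ a b : p, B.restrict p a b = B (a : g) (b : g) := fun a b => rfl
  have hsy' : (B.restrict p).IsSymm := by
    constructor
    intro a b
    simpa [hrestrict] using hsymm (a : g) (b : g)
  have hBp : (B.restrict p).Nondegenerate := by
    have hrefl : B.IsRefl := hBsymm.isRefl
    have hcompl : IsCompl r.toSubmodule (B.orthogonal r.toSubmodule) :=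
      B.isCompl_orthogonal_of_restrict_nondegenerate hrefl hBr
    refine LinearMap.BilinForm.Nondegenerate.ofSeparatingLeft ?_
    intro y hy
    have hyg : (y : g) = 0 := by
      apply hBnd.1
      intro w
      have hw : w ∈ r.toSubmodule ⊔ B.orthogonal r.toSubmodule := by
        rw [hcompl.sup_eq_top]; trivial
      obtain ⟨wr, hwr, wp, hwp, rfl⟩ := Submodule.mem_sup.mp hw
      have h1 : B wr (y : g) = 0 := by
        have hyp : (y : g) ∈ B.orthogonal r.toSubmodule := hp ▸ y.2
        exact hyp wr hwr
      have h2 : B (y : g) wp = 0 := by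
        have hwp' : wp ∈ p := hp ▸ hwp
        simpa [hrestrict] using hy ⟨wp, hwp'⟩
      rw [map_add (B (y : g)), hsymm (y : g) wr, h1, h2, add_zero]
    exact Subtype.ext hyg
  -- value of the changeForm bilinear form
  have hassoc : QuadraticMap.associated (R := ℂ) Q = B.restrict p := by
    rw [hQ]
    exact QuadraticMap.associated_left_inverse _ hsy'.eq
  have hβ : ∀ a b : p, betaQ Q a b = B (a : g) (b : g) := by
    intro a b
    have h1 : betaQ Q = QuadraticMap.associated (R := ℂ) Q := by
      simp [betaQ, map_neg]
    rw [h1, hassoc]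
    exact hrestrict a b
  -- the translation of `hBc` to the restricted form
  have hBc' : ∀ a b c a' b' c' : p,
      Bc (ExteriorAlgebra.ι ℂ a * ExteriorAlgebra.ι ℂ b * ExteriorAlgebra.ι ℂ c)
         (ExteriorAlgebra.ι ℂ a' * ExteriorAlgebra.ι ℂ b' * ExteriorAlgebra.ι ℂ c') =
      Matrix.det !![B.restrict p a a', B.restrict p a b', B.restrict p a c';
                    B.restrict p b a', B.restrict p b b', B.restrict p b c';
                    B.restrict p c a', B.restrict p c b', B.restrict p c c'] := by
    intro a b c a' b' c'
    rw [hBc]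
    congr 1
  -- ve lies in the span of decomposables
  have hS : ve ∈ Submodule.span ℂ
      {z : ExteriorAlgebra ℂ p | ∃ a b c : p,
        z = ExteriorAlgebra.ι ℂ a * ExteriorAlgebra.ι ℂ b * ExteriorAlgebra.ι ℂ c} := by
    set S := {z : ExteriorAlgebra ℂ p | ∃ a b c : p,
        z = ExteriorAlgebra.ι ℂ a * ExteriorAlgebra.ι ℂ b * ExteriorAlgebra.ι ℂ c}
    have h3 : (LinearMap.range (ExteriorAlgebra.ι ℂ : p →ₗ[ℂ] ExteriorAlgebra ℂ p)) ^ 3 =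
        LinearMap.range (ExteriorAlgebra.ι ℂ : p →ₗ[ℂ] ExteriorAlgebra ℂ p) *
        LinearMap.range (ExteriorAlgebra.ι ℂ : p →ₗ[ℂ] ExteriorAlgebra ℂ p) *
        LinearMap.range (ExteriorAlgebra.ι ℂ : p →ₗ[ℂ] ExteriorAlgebra ℂ p) := by
      rw [pow_succ, pow_succ, pow_one]
    rw [h3] at hv3
    refine Submodule.mul_le.mpr ?_ hv3
    rintro y hy _ ⟨c, rfl⟩
    refine Submodule.mul_induction_on hy ?_ ?_
    · rintro _ ⟨a, rfl⟩ _ ⟨bb, rfl⟩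
      exact Submodule.subset_span ⟨a, bb, c, rfl⟩
    · intro z w hz hw
      rw [add_mul]
      exact add_mem hz hw
  -- main commutation statement, for every x : r
  have hcomm : ∀ x : r, v * ν x = ν x * v := by
    intro x
    -- the operator ad x on p
    let f : p →ₗ[ℂ] p :=
      { toFun := fun y => ⟨⁅(x : g), (y : g)⁆, hbr x y⟩
        map_add' := fun y z => by ext; simp
        map_smul' := fun t y => by ext; simp }
    have hfval : ∀ y : p, ((f y : p) : g) = ⁅(x : g), (y : g)⁆ := fun y => rfl
    have hf : ∀ y : p, ν x * ι Q y - ι Q y * ν x = ι Q (f y) := by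
      intro y
      have h := hνdef x y
      rw [Ring.lie_def] at h
      exact h.symm
    have hskewβ : ∀ y z : p, betaQ Q (f y) z = - betaQ Q y (f z) := by
      intro y z
      rw [hβ, hβ, hfval, hfval]
      exact hskewg (x : g) (y : g) (z : g)
    -- the conjugated derivation on the exterior algebra
    set T : ExteriorAlgebra ℂ p →ₗ[ℂ] ExteriorAlgebra ℂ p :=
      (equivExterior Q).toLinearMap ∘ₗ
        (LinearMap.mulLeft ℂ (ν x) - LinearMap.mulRight ℂ (ν x)) ∘ₗ
        (equivExterior Q).symm.toLinearMap with hT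
    have hTapply : ∀ w : ExteriorAlgebra ℂ p,
        T w = equivExterior Q (ν x * (equivExterior Q).symm w - (equivExterior Q).symm w * ν x) := by
      intro w
      simp [hT, LinearMap.mulLeft_apply, LinearMap.mulRight_apply]
    have hTgen : ∀ a b c : p,
        T (ExteriorAlgebra.ι ℂ a * ExteriorAlgebra.ι ℂ b * ExteriorAlgebra.ι ℂ c) =
          ExteriorAlgebra.ι ℂ (f a) * ExteriorAlgebra.ι ℂ b * ExteriorAlgebra.ι ℂ c
          + ExteriorAlgebra.ι ℂ a * ExteriorAlgebra.ι ℂ (f b) * ExteriorAlgebra.ι ℂ c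
          + ExteriorAlgebra.ι ℂ a * ExteriorAlgebra.ι ℂ b * ExteriorAlgebra.ι ℂ (f c) := by
      intro a b c
      rw [hTapply, D_symm_triple Q (ν x) f hf hskewβ a b c]
      exact (equivExterior Q).apply_symm_apply _
    -- T ve stays in the span of decomposables
    have hTspan : T ve ∈ Submodule.span ℂ
        {z : ExteriorAlgebra ℂ p | ∃ a b c : p,
          z = ExteriorAlgebra.ι ℂ a * ExteriorAlgebra.ι ℂ b * ExteriorAlgebra.ι ℂ c} := by
      refine Submodule.span_induction ?_ ?_ ?_ ?_ hS
      · rintro _ ⟨a, b, c, rfl⟩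
        rw [hTgen]
        refine add_mem (add_mem ?_ ?_) ?_ <;> exact Submodule.subset_span ⟨_, _, _, rfl⟩
      · rw [map_zero]; exact zero_mem _
      · intro z w _ _ hz hw
        rw [map_add]; exact add_mem hz hw
      · intro t z _ hz
        rw [map_smul]; exact Submodule.smul_mem _ _ hz
    -- T ve pairs to zero with all decomposables
    have hvBc : ∀ y1 y2 y3 : p, Bc ve
        (ExteriorAlgebra.ι ℂ y1 * ExteriorAlgebra.ι ℂ y2 * ExteriorAlgebra.ι ℂ y3)
        = (-1/2 : ℂ) * B ⁅(y1 : g), (y2 : g)⁆ (y3 : g) := by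
      intro y1 y2 y3
      have h := hvdef y1 y2 y3
      linear_combination (1/2 : ℂ) * h
    have hperp : ∀ a' b' c' : p, Bc (T ve)
        (ExteriorAlgebra.ι ℂ a' * ExteriorAlgebra.ι ℂ b' * ExteriorAlgebra.ι ℂ c') = 0 := by
      intro a' b' c'
      set L : ExteriorAlgebra ℂ p →ₗ[ℂ] ℂ :=
        (Bc.flip (ExteriorAlgebra.ι ℂ a' * ExteriorAlgebra.ι ℂ b' * ExteriorAlgebra.ι ℂ c')) ∘ₗ T
          + Bc.flip (ExteriorAlgebra.ι ℂ (f a') * ExteriorAlgebra.ι ℂ b' * ExteriorAlgebra.ι ℂ c')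
          + Bc.flip (ExteriorAlgebra.ι ℂ a' * ExteriorAlgebra.ι ℂ (f b') * ExteriorAlgebra.ι ℂ c')
          + Bc.flip (ExteriorAlgebra.ι ℂ a' * ExteriorAlgebra.ι ℂ b' * ExteriorAlgebra.ι ℂ (f c'))
        with hL
      have hLapply : ∀ z : ExteriorAlgebra ℂ p, L z =
          Bc (T z) (ExteriorAlgebra.ι ℂ a' * ExteriorAlgebra.ι ℂ b' * ExteriorAlgebra.ι ℂ c')
          + Bc z (ExteriorAlgebra.ι ℂ (f a') * ExteriorAlgebra.ι ℂ b' * ExteriorAlgebra.ι ℂ c')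
          + Bc z (ExteriorAlgebra.ι ℂ a' * ExteriorAlgebra.ι ℂ (f b') * ExteriorAlgebra.ι ℂ c')
          + Bc z (ExteriorAlgebra.ι ℂ a' * ExteriorAlgebra.ι ℂ b' * ExteriorAlgebra.ι ℂ (f c')) := by
        intro z
        simp [hL, LinearMap.flip_apply]
      have hLgen : ∀ a b c : p, L (ExteriorAlgebra.ι ℂ a * ExteriorAlgebra.ι ℂ b *
          ExteriorAlgebra.ι ℂ c) = 0 := by
        intro a b c
        rw [hLapply, hTgen, map_add, map_add, LinearMap.add_apply, LinearMap.add_apply]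
        rw [hBc, hBc, hBc, hBc, hBc, hBc]
        simp only [hfval]
        simp only [hskewg]
        simp [Matrix.det_fin_three]
        try ring
      have hL0 : L ve = 0 := by
        refine Submodule.span_induction ?_ ?_ ?_ ?_ hS
        · rintro _ ⟨a, b, c, rfl⟩
          exact hLgen a b c
        · simp
        · intro z w _ _ hz hw
          rw [map_add, hz, hw, add_zero]
        · intro t z _ hz
          rw [map_smul, hz, smul_zero]
      have hslot : Bc ve (ExteriorAlgebra.ι ℂ (f a') * ExteriorAlgebra.ι ℂ b' * ExteriorAlgebra.ι ℂ c')
          + Bc ve (ExteriorAlgebra.ι ℂ a' * ExteriorAlgebra.ι ℂ (f b') * ExteriorAlgebra.ι ℂ c')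
          + Bc ve (ExteriorAlgebra.ι ℂ a' * ExteriorAlgebra.ι ℂ b' * ExteriorAlgebra.ι ℂ (f c')) = 0 := by
        rw [hvBc, hvBc, hvBc]
        simp only [hfval]
        have h := hinv (x : g) (a' : g) (b' : g) (c' : g)
        linear_combination (-1/2 : ℂ) * h
      have hfin := hLapply ve
      rw [hL0] at hfin
      linear_combination - hfin - hslot
    -- conclude via nondegeneracy
    have hT0 : T ve = 0 := by
      refine pairing_zero (B.restrict p) hBp hsy' Bc hBc' (T ve) hTspan hperp
    have hDv : ν x * v - v * ν x = 0 := by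
      have h1 : ν x * v - v * ν x = (equivExterior Q).symm (T ve) := by
        rw [hTapply, hv, LinearEquiv.symm_apply_apply]
      rw [h1, hT0, map_zero]
    have := sub_eq_zero.mp hDv
    exact this.symm
  refine ⟨fun x _ => hcomm x, ?_⟩
  rintro β s ⟨t, rfl⟩ hwt
  constructor
  · exact ⟨v * t, by simp [LinearMap.mulRight_apply, mul_assoc]⟩
  · intro x hx
    have h1 : ν x * (v * (LinearMap.mulRight ℂ u) t) = v * (ν x * (LinearMap.mulRight ℂ u) t) := by
      rw [← mul_assoc, ← hcomm x, mul_assoc]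
    rw [h1, hwt x hx, mul_smul_comm]
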